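/- Let ρ_d > 0, b ∈ ℝ, let α : ℝ → (0, ∞) and ω : ℝ → (0, ∞) be continuous, and let (A*, Ω*) be a C¹ solution of the Approximation 4 system for t > 0. Then for all t > 0 and x ∈ [0,1] with ρ_d t > x, the representation formula Ω*(x, t) = (ω(Ω̄(t − x/ρ_d))/ρ_d)·A*(t − x/ρ_d)·exp( (b/ρ_d)·x − ∫_{t − x/ρ_d}^{t} α(A*(u)) du ) holds, where Ω̄(s) = ∫₀¹ Ω*(y, s) dy. -/

import Mathlib

open Real Set Filter Topology

/-- `(A, Ω)` is a C¹ solution of the Approximation 4 system for `t > 0`: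
`dA/dt = −ω(Ω̄(t)) A(t) + α(A(t)) Ω̄(t)`;
`∂Ω/∂t + ρ ∂Ω/∂x = (b − α(A(t))) Ω(x,t)` for `x ∈ [0,1]`;
`Ω(0,t) = ω(Ω̄(t)) A(t) / ρ`, where `Ω̄(t) = ∫₀¹ Ω(x,t) dx`.
Here `Ωt` and `Ωx` are the (continuous) partial derivatives of `Ω`. -/
def IsApprox4Solution (ρ b : ℝ) (α ω : ℝ → ℝ) (A : ℝ → ℝ)
    (Ω Ωt Ωx : ℝ → ℝ → ℝ) : Prop :=
  (∀ t ∈ Set.Ioi (0 : ℝ),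
    HasDerivAt A
      (-(ω (∫ x in (0 : ℝ)..1, Ω x t)) * A t +
        α (A t) * ∫ x in (0 : ℝ)..1, Ω x t) t) ∧
  (∀ t ∈ Set.Ioi (0 : ℝ), ∀ x ∈ Set.Icc (0 : ℝ) 1,
    HasDerivAt (fun s => Ω x s) (Ωt x t) t ∧
    HasDerivWithinAt (fun y => Ω y t) (Ωx x t) (Set.Icc 0 1) x ∧
    Ωt x t + ρ * Ωx x t = (b - α (A t)) * Ω x t) ∧
  (∀ t ∈ Set.Ioi (0 : ℝ),
    Ω 0 t = ω (∫ x in (0 : ℝ)..1, Ω x t) * A t / ρ) ∧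
  ContinuousOn (fun p : ℝ × ℝ => Ω p.1 p.2) (Set.Icc 0 1 ×ˢ Set.Ioi 0) ∧
  ContinuousOn (fun p : ℝ × ℝ => Ωt p.1 p.2) (Set.Icc 0 1 ×ˢ Set.Ioi 0) ∧
  ContinuousOn (fun p : ℝ × ℝ => Ωx p.1 p.2) (Set.Icc 0 1 ×ˢ Set.Ioi 0)

/-- Let `ρ > 0`, `b ∈ ℝ`, `α, ω : ℝ → (0,∞)` continuous, and let
`(A, Ω)` be a C¹ solution of the Approximation 4 system for `t > 0`.  Then for all
`t > 0` and `x ∈ [0,1]` with `ρ t > x`, the characteristics representation formula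
`Ω(x,t) = (ω(Ω̄(t − x/ρ))/ρ) A(t − x/ρ) exp((b/ρ) x − ∫_{t−x/ρ}^t α(A(u)) du)`
holds. -/
theorem stmt10 (ρ b : ℝ) (hρ : 0 < ρ) (α ω : ℝ → ℝ)
    (hαc : Continuous α) (hωc : Continuous ω)
    (hαpos : ∀ A : ℝ, 0 < α A) (hωpos : ∀ Ω : ℝ, 0 < ω Ω)
    (A : ℝ → ℝ) (Ω Ωt Ωx : ℝ → ℝ → ℝ)
    (hsol : IsApprox4Solution ρ b α ω A Ω Ωt Ωx) :
    ∀ t ∈ Set.Ioi (0 : ℝ), ∀ x ∈ Set.Icc (0 : ℝ) 1, ρ * t > x →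
      Ω x t =
        (ω (∫ y in (0 : ℝ)..1, Ω y (t - x / ρ)) / ρ) * A (t - x / ρ) *
          Real.exp ((b / ρ) * x - ∫ u in (t - x / ρ)..t, α (A u)) := by
  obtain ⟨hA, hPDE, hBC, hΩc, hΩtc, hΩxc⟩ := hsol
  intro t ht x hx hρt
  have hρ0 : ρ ≠ 0 := ne_of_gt hρ
  set s₀ : ℝ := t - x / ρ with hs₀def
  have hs₀pos : 0 < s₀ := by
    have h1 : x / ρ < t := (div_lt_iff₀ hρ).2 (by linarith)
    simp only [hs₀def]; linarith
  have hs₀le : s₀ ≤ t := by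
    have : 0 ≤ x / ρ := div_nonneg hx.1 hρ.le
    simp only [hs₀def]; linarith
  have hts₀ : ρ * (t - s₀) = x := by
    simp only [hs₀def]; field_simp; ring
  set φ : ℝ → ℝ := fun s => Ω (ρ * (s - s₀)) s with hφdef
  have hspos : ∀ s ∈ Icc s₀ t, (0 : ℝ) < s := fun s hs => lt_of_lt_of_le hs₀pos hs.1
  have hXmem : ∀ s ∈ Icc s₀ t, ρ * (s - s₀) ∈ Icc (0 : ℝ) 1 := by
    intro s hs
    constructor
    · have : 0 ≤ s - s₀ := by linarith [hs.1]
      positivity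
    · have h1 : ρ * (s - s₀) ≤ ρ * (t - s₀) := by
        apply mul_le_mul_of_nonneg_left _ hρ.le
        linarith [hs.2]
      rw [hts₀] at h1
      linarith [hx.2]
  -- ContinuousOn of the x-slice
  have hslice : ∀ r ∈ Icc s₀ t, ContinuousOn (fun y => Ω y r) (Icc (0:ℝ) 1) := by
    intro r hr
    have : ContinuousOn (fun y => ((y, r) : ℝ × ℝ)) (Icc (0:ℝ) 1) :=
      (continuous_id.prodMk continuous_const).continuousOn
    exact hΩc.comp this (fun y hy => ⟨hy, hspos r hr⟩)
  -- Key derivative along the characteristic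
  have hφderiv : ∀ s ∈ Icc s₀ t,
      HasDerivWithinAt φ ((b - α (A s)) * φ s) (Icc s₀ t) s := by
    intro s hs
    have hsIoi : s ∈ Ioi (0:ℝ) := hspos s hs
    set X : ℝ := ρ * (s - s₀) with hXdef
    have hXIcc : X ∈ Icc (0:ℝ) 1 := hXmem s hs
    obtain ⟨hΩXt, hΩXx, hpde⟩ := hPDE s hsIoi X hXIcc
    -- MVT selection
    have hMVT : ∀ r ∈ Icc s₀ t \ {s}, ∃ c, c ∈ Icc (0:ℝ) 1 ∧ |c - X| ≤ ρ * |r - s| ∧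
        ρ * Ωx c r = (Ω (ρ * (r - s₀)) r - Ω X r) / (r - s) := by
      intro r hr
      obtain ⟨hrS, hrne⟩ := hr
      have hrs : r ≠ s := hrne
      have hrIoi : r ∈ Ioi (0:ℝ) := hspos r hrS
      have hXrIcc : ρ * (r - s₀) ∈ Icc (0:ℝ) 1 := hXmem r hrS
      have hderiv : ∀ y ∈ Ioo (0:ℝ) 1, HasDerivAt (fun y' => Ω y' r) (Ωx y r) y := by
        intro y hy
        exact (hPDE r hrIoi y (Ioo_subset_Icc_self hy)).2.1.hasDerivAt
          (Icc_mem_nhds hy.1 hy.2)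
      rcases lt_or_gt_of_ne hrs with hlt | hgt
      · -- r < s : segment from ρ(r-s₀) to X
        have hab : ρ * (r - s₀) < X := by
          rw [hXdef]; exact mul_lt_mul_of_pos_left (by linarith) hρ
        obtain ⟨c, hc, hceq⟩ := exists_hasDerivAt_eq_slope (fun y => Ω y r)
          (fun y => Ωx y r) hab
          ((hslice r hrS).mono (Icc_subset_Icc hXrIcc.1 hXIcc.2))
          (fun y hy => hderiv y ⟨lt_of_le_of_lt hXrIcc.1 hy.1, lt_of_lt_of_le hy.2 hXIcc.2⟩)
        refine ⟨c, ⟨le_trans hXrIcc.1 hc.1.le, le_trans hc.2.le hXIcc.2⟩, ?_, ?_⟩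
        · rw [abs_of_neg (by linarith : r - s < 0), abs_of_neg (by linarith [hc.2] : c - X < 0)]
          nlinarith [hc.1]
        · rw [hceq]
          have h1 : X - ρ * (r - s₀) = ρ * (s - r) := by rw [hXdef]; ring
          rw [h1]
          have h2 : s - r ≠ 0 := by intro h; apply hrs; linarith
          have h3 : r - s ≠ 0 := by intro h; apply hrs; linarith
          have key : ∀ p q : ℝ, ρ * ((p - q) / (ρ * (s - r))) = (q - p) / (r - s) := by
            intro p q; field_simp; ring
          exact key _ _
      · -- s < r
        have hab : X < ρ * (r - s₀) := by
          rw [hXdef]; exact mul_lt_mul_of_pos_left (by linarith) hρ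
        obtain ⟨c, hc, hceq⟩ := exists_hasDerivAt_eq_slope (fun y => Ω y r)
          (fun y => Ωx y r) hab
          ((hslice r hrS).mono (Icc_subset_Icc hXIcc.1 hXrIcc.2))
          (fun y hy => hderiv y ⟨lt_of_le_of_lt hXIcc.1 hy.1, lt_of_lt_of_le hy.2 hXrIcc.2⟩)
        refine ⟨c, ⟨le_trans hXIcc.1 hc.1.le, le_trans hc.2.le hXrIcc.2⟩, ?_, ?_⟩
        · rw [abs_of_pos (by linarith : (0:ℝ) < r - s), abs_of_pos (by linarith [hc.1] : (0:ℝ) < c - X)]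
          nlinarith [hc.2]
        · rw [hceq]
          have h1 : ρ * (r - s₀) - X = ρ * (r - s) := by rw [hXdef]; ring
          rw [h1]
          have h2 : r - s ≠ 0 := by intro h; apply hrs; linarith
          have key : ∀ p q : ℝ, ρ * ((q - p) / (ρ * (r - s))) = (q - p) / (r - s) := by
            intro p q; field_simp
          exact key _ _
    choose! c hc1 hc2 hc3 using hMVT
    -- the filter
    set F := 𝓝[Icc s₀ t \ {s}] s with hFdef
    have hFle : F ≤ 𝓝[≠] s := nhdsWithin_mono s (fun r hr => hr.2)
    have hFs : Tendsto (fun r : ℝ => r) F (𝓝 s) := tendsto_id.mono_left nhdsWithin_le_nhds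
    -- c tends to X
    have hcX : Tendsto c F (𝓝 X) := by
      have h0 : Tendsto (fun r : ℝ => ρ * |r - s|) F (𝓝 0) := by
        have hcont : Continuous (fun r : ℝ => ρ * |r - s|) := by fun_prop
        have := hcont.tendsto s
        simp only [sub_self, abs_zero, mul_zero] at this
        exact this.mono_left nhdsWithin_le_nhds
      have h1 : Tendsto (fun r => c r - X) F (𝓝 0) := by
        apply squeeze_zero_norm' _ h0
        filter_upwards [self_mem_nhdsWithin] with r hr
        exact hc2 r hr
      have := h1.add_const X
      simpa using this
    have hpair : Tendsto (fun r => ((c r : ℝ), r)) F (𝓝[Icc (0:ℝ) 1 ×ˢ Ioi (0:ℝ)] (X, s)) := by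
      rw [tendsto_nhdsWithin_iff]
      constructor
      · exact hcX.prodMk_nhds hFs
      · filter_upwards [self_mem_nhdsWithin] with r hr
        exact ⟨hc1 r hr, hspos r hr.1⟩
    have hT1 : Tendsto (fun r => ρ * Ωx (c r) r) F (𝓝 (ρ * Ωx X s)) := by
      have hcw : ContinuousWithinAt (fun p : ℝ × ℝ => Ωx p.1 p.2)
          (Icc (0:ℝ) 1 ×ˢ Ioi (0:ℝ)) (X, s) := hΩxc (X, s) ⟨hXIcc, hsIoi⟩
      exact (hcw.tendsto.comp hpair).const_mul ρ
    have hT2 : Tendsto (slope (fun τ => Ω X τ) s) F (𝓝 (Ωt X s)) :=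
      (hasDerivAt_iff_tendsto_slope.1 hΩXt).mono_left hFle
    have hsum := hT2.add hT1
    have hεq : (fun r => slope (fun τ => Ω X τ) s r + ρ * Ωx (c r) r) =ᶠ[F] slope φ s := by
      filter_upwards [self_mem_nhdsWithin] with r hr
      have hrs : r - s ≠ 0 := sub_ne_zero.2 hr.2
      rw [hc3 r hr, slope_def_field, slope_def_field]
      simp only [hφdef, hXdef]
      rw [← add_div, div_eq_div_iff hrs hrs]
      ring
    have hmain : HasDerivWithinAt φ (Ωt X s + ρ * Ωx X s) (Icc s₀ t) s := by
      rw [hasDerivWithinAt_iff_tendsto_slope]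
      exact hsum.congr' hεq
    have hval : Ωt X s + ρ * Ωx X s = (b - α (A s)) * φ s := by
      rw [hpde]
    rwa [hval] at hmain
  -- the integrating factor
  have hAcont : ∀ s ∈ Icc s₀ t, ContinuousAt (fun u => α (A u)) s := by
    intro s hs
    exact hαc.continuousAt.comp (hA s (hspos s hs)).continuousAt
  set B : ℝ → ℝ := fun s => b * (s - s₀) - ∫ u in s₀..s, α (A u) with hBdef
  have hint : ∀ s ∈ Icc s₀ t, IntervalIntegrable (fun u => α (A u)) MeasureTheory.volume s₀ s := by
    intro s hs
    apply ContinuousOn.intervalIntegrable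
    intro u hu
    rw [uIcc_of_le hs.1] at hu
    exact (hAcont u ⟨hu.1, le_trans hu.2 hs.2⟩).continuousWithinAt
  have hB : ∀ s ∈ Icc s₀ t, HasDerivAt B (b - α (A s)) s := by
    intro s hs
    have h1 : HasDerivAt (fun s : ℝ => b * (s - s₀)) b s := by
      simpa using ((hasDerivAt_id s).sub_const s₀).const_mul b
    have hmeas : StronglyMeasurableAtFilter (fun u => α (A u)) (𝓝 s) MeasureTheory.volume := by
      apply ContinuousAt.stronglyMeasurableAtFilter (s := Ioi (0:ℝ)) isOpen_Ioi
      · intro u hu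
        exact hαc.continuousAt.comp (hA u hu).continuousAt
      · exact hspos s hs
    have h2 : HasDerivAt (fun s : ℝ => ∫ u in s₀..s, α (A u)) (α (A s)) s :=
      intervalIntegral.integral_hasDerivAt_right (hint s hs) hmeas (hAcont s hs)
    exact h1.sub h2
  set g : ℝ → ℝ := fun s => φ s * Real.exp (-(B s)) with hgdef
  have hg0 : ∀ s ∈ Icc s₀ t, HasDerivWithinAt g 0 (Icc s₀ t) s := by
    intro s hs
    have he : HasDerivAt (fun s => Real.exp (-(B s)))
        (Real.exp (-(B s)) * (-(b - α (A s)))) s := ((hB s hs).neg).exp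
    have := (hφderiv s hs).mul he.hasDerivWithinAt
    have h0 : (b - α (A s)) * φ s * Real.exp (-(B s)) + φ s * (Real.exp (-(B s)) * (-(b - α (A s)))) = 0 := by ring
    rw [h0] at this
    exact this
  have hgcont : ContinuousOn g (Icc s₀ t) := fun s hs => (hg0 s hs).continuousWithinAt
  have hconst := constant_of_has_deriv_right_zero hgcont (fun s hs => by
    have hmem : Icc s₀ t ∈ 𝓝[Ici s] s := by
      rw [mem_nhdsWithin]
      exact ⟨Iio t, isOpen_Iio, hs.2, fun y hy => ⟨le_trans hs.1 hy.2, hy.1.le⟩⟩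
    exact (hg0 s (Ico_subset_Icc_self hs)).mono_of_mem_nhdsWithin hmem)
  have hgt : g t = g s₀ := hconst t (right_mem_Icc.2 hs₀le)
  have hBs₀ : B s₀ = 0 := by simp [hBdef]
  have hφs₀ : φ s₀ = ω (∫ y in (0:ℝ)..1, Ω y s₀) * A s₀ / ρ := by
    simp only [hφdef, sub_self, mul_zero]
    exact hBC s₀ hs₀pos
  have hφt : φ t = Ω x t := by simp only [hφdef, hts₀]
  have hBt : B t = (b / ρ) * x - ∫ u in s₀..t, α (A u) := by
    simp only [hBdef]
    have : b * (t - s₀) = b / ρ * x := by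
      rw [← hts₀]; field_simp
    rw [this]
  rw [hgdef] at hgt
  simp only at hgt
  rw [hφt, hφs₀, hBs₀] at hgt
  simp only [neg_zero, Real.exp_zero, mul_one] at hgt
  have hexp : Real.exp (-(B t)) ≠ 0 := Real.exp_ne_zero _
  have hΩxt : Ω x t = (Ω x t * Real.exp (-(B t))) * Real.exp (B t) := by
    rw [mul_assoc, ← Real.exp_add]
    simp
  rw [hΩxt, hgt, hBt]
  ring
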